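/- Let W^{[M]} = exp(∑_{2n+1≤M} α_{-(2n+1)}/(2n+1))·exp(-∑_{2n+1≤M} α_{2n+1}/(2n+1)) acting on the charge-zero fermionic Fock space, where α_k are the standard bosonic modes with [α_k, α_m] = k δ_{k+m,0} and α_k† = α_{-k}. Then (W^{[M]}†)^{-1} = exp(-∑_{n=0}^{⌊(M-1)/2⌋} 1/(2n+1))·W^{[M]}; consequently every matrix element of W^{[M]} between unit vectors is bounded by exp((1/2)∑_{n=0}^{⌊(M-1)/2⌋} 1/(2n+1)). -/

import Mathlib

/-- The bosonic Fock space `ℂ[p₁,p₂,…]` (real form), with variable `i` standing for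
`p_{i+1}`. -/
abbrev FockPoly := MvPolynomial ℕ ℝ

/-- The lowering part `B = ∑_{2n+1 ≤ M} α_{2n+1}/(2n+1) = ∑_{2n+1 ≤ M} ∂/∂p_{2n+1}`
(here `α_k = k ∂/∂p_k` for `k > 0`). -/
noncomputable def lowerB (M : ℕ) : FockPoly →ₗ[ℝ] FockPoly :=
  ∑ i ∈ (Finset.range M).filter (fun i => Even i),
    (MvPolynomial.pderiv (R := ℝ) i).toLinearMap

/-- `exp(s·B) f`, a finite sum since `B` is locally nilpotent. -/
noncomputable def expB (M : ℕ) (s : ℝ) (f : FockPoly) : FockPoly :=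
  ∑ j ∈ Finset.range (f.totalDegree + 1),
    ((j.factorial : ℝ)⁻¹ * s ^ j) • ((lowerB M) ^ j) f

/-- The squared norm of the monomial `∏ p_{i+1}^{m i}`, making `α_k† = α_{-k}`:
`w(m) = ∏ (i+1)^{m i} (m i)!`. -/
noncomputable def wMon (m : ℕ →₀ ℕ) : ℝ :=
  ∏ i ∈ m.support, (((i : ℝ) + 1) ^ (m i) * ((m i).factorial : ℝ))

/-- The inner product on the Fock space in which `α_k† = α_{-k}`. -/
noncomputable def ipF (f g : FockPoly) : ℝ :=
  ∑ᶠ m : ℕ →₀ ℕ, MvPolynomial.coeff m f * MvPolynomial.coeff m g * wMon m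

/-- The matrix element `⟨W^{[M]} x, y⟩` of
`W^{[M]} = exp(∑_{2n+1≤M} α_{-(2n+1)}/(2n+1)) exp(-∑_{2n+1≤M} α_{2n+1}/(2n+1))`:
since `(∑ α_{-(2n+1)}/(2n+1))† = ∑ α_{2n+1}/(2n+1)`, one has
`⟨W x, y⟩ = ⟨e^{-B} x, e^{B} y⟩`. -/
noncomputable def WM (M : ℕ) (x y : FockPoly) : ℝ :=
  ipF (expB M (-1) x) (expB M 1 y)

/-- The central constant `∑_{n=0}^{⌊(M-1)/2⌋} 1/(2n+1)`. -/
noncomputable def cM (M : ℕ) : ℝ :=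
  ∑ n ∈ Finset.range ((M - 1) / 2 + 1), (1 : ℝ) / (2 * n + 1)

open Finset MvPolynomial

noncomputable section Aux

def Sev (M : ℕ) : Finset ℕ := (Finset.range M).filter (fun i => Even i)

def lamq (i : ℕ) : ℝ := ((i : ℝ) + 1)⁻¹

lemma lamq_pos (i : ℕ) : 0 < lamq i := by
  have : (0:ℝ) < (i:ℝ) + 1 := by positivity
  exact inv_pos.2 this

lemma lamq_ne (i : ℕ) : lamq i ≠ 0 := (lamq_pos i).ne'

def wk (i k : ℕ) : ℝ := ((i : ℝ) + 1) ^ k * (k.factorial : ℝ)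

lemma wk_pos (i k : ℕ) : 0 < wk i k := by
  have h1 : (0:ℝ) < ((i:ℝ)+1) ^ k := by positivity
  have h2 : (0:ℝ) < (k.factorial : ℝ) := by positivity
  exact mul_pos h1 h2

lemma wk_ne (i k : ℕ) : wk i k ≠ 0 := (wk_pos i k).ne'

lemma wk_zero (i : ℕ) : wk i 0 = 1 := by simp [wk]

def gk (M : ℕ) (r : ℝ) (i A k : ℕ) : ℝ :=
  if i ∈ Sev M then
    (if A ≤ k then (r * lamq i) ^ (k - A) / ((k - A).factorial : ℝ) else 0)
  else (if A = k then 1 else 0)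

lemma gk_zero_zero (M : ℕ) (r : ℝ) (i : ℕ) : gk M r i 0 0 = 1 := by
  simp [gk]

def phiP (M : ℕ) (r : ℝ) (a m : ℕ →₀ ℕ) : ℝ :=
  ∏ i ∈ a.support ∪ m.support, gk M r i (a i) (m i)

lemma phiP_eq_prod (M : ℕ) (r : ℝ) (a m : ℕ →₀ ℕ) {U : Finset ℕ}
    (h : a.support ∪ m.support ⊆ U) :
    phiP M r a m = ∏ i ∈ U, gk M r i (a i) (m i) := by
  rw [phiP]
  refine Finset.prod_subset h ?_
  intro i _ hi
  have ha : a i = 0 := by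
    by_contra h'
    exact hi (Finset.mem_union.2 (Or.inl (Finsupp.mem_support_iff.2 h')))
  have hm : m i = 0 := by
    by_contra h'
    exact hi (Finset.mem_union.2 (Or.inr (Finsupp.mem_support_iff.2 h')))
  rw [ha, hm, gk_zero_zero]

lemma wMon_eq_prod (m : ℕ →₀ ℕ) {U : Finset ℕ} (h : m.support ⊆ U) :
    wMon m = ∏ i ∈ U, wk i (m i) := by
  rw [wMon]
  refine Finset.prod_subset (f := fun i => wk i (m i)) h ?_
  intro i _ hi
  have hm : m i = 0 := Finsupp.notMem_support_iff.1 hi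
  rw [hm, wk]; simp

lemma wMon_pos (m : ℕ →₀ ℕ) : 0 < wMon m := by
  rw [wMon_eq_prod m (le_refl m.support)]
  exact Finset.prod_pos (fun i _ => wk_pos i (m i))

lemma wMon_ne (m : ℕ →₀ ℕ) : wMon m ≠ 0 := (wMon_pos m).ne'

lemma wMon_zero : wMon 0 = 1 := by simp [wMon]

lemma phiP_eq_zero_of_not_le (M : ℕ) (r : ℝ) {a m : ℕ →₀ ℕ} (h : ¬ a ≤ m) :
    phiP M r a m = 0 := by
  rw [Finsupp.le_def] at h
  push_neg at h
  obtain ⟨i, hi⟩ := h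
  have hia : i ∈ a.support ∪ m.support := by
    refine Finset.mem_union.2 (Or.inl (Finsupp.mem_support_iff.2 ?_))
    omega
  refine Finset.prod_eq_zero hia ?_
  rw [gk]
  split_ifs with h1 h2 h3
  · omega
  · rfl
  · omega
  · rfl

lemma cM_eq (M : ℕ) (hM : 1 ≤ M) : cM M = ∑ i ∈ Sev M, lamq i := by
  rw [cM]
  refine Finset.sum_nbij' (fun n => 2 * n) (fun i => i / 2) ?_ ?_ ?_ ?_ ?_
  · intro n hn
    simp only [Finset.mem_range] at hn
    simp only [Sev, Finset.mem_filter, Finset.mem_range]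
    constructor
    · omega
    · exact even_two_mul n
  · intro i hi
    simp only [Sev, Finset.mem_filter, Finset.mem_range] at hi
    obtain ⟨h1, h2⟩ := hi
    rw [Nat.even_iff] at h2
    simp only [Finset.mem_range]
    omega
  · intro n _; omega
  · intro i hi
    simp only [Sev, Finset.mem_filter, Finset.mem_range] at hi
    obtain ⟨h1, h2⟩ := hi
    rw [Nat.even_iff] at h2
    omega
  · intro n _
    rw [lamq]
    rw [one_div]
    congr 1
    push_cast
    ring

end Aux

section IP

lemma ipf_eq_sum (f g : FockPoly) {U : Finset (ℕ →₀ ℕ)} (hf : f.support ⊆ U) :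
    ipF f g = ∑ m ∈ U, MvPolynomial.coeff m f * MvPolynomial.coeff m g * wMon m := by
  rw [ipF]
  refine finsum_eq_finset_sum_of_support_subset _ ?_
  intro m hm
  simp only [Function.mem_support] at hm
  have : MvPolynomial.coeff m f ≠ 0 := by
    intro h; apply hm; rw [h]; ring
  exact hf (MvPolynomial.mem_support_iff.2 this)

lemma ipf_comm (f g : FockPoly) : ipF f g = ipF g f := by
  rw [ipF, ipF]
  exact finsum_congr (fun m => by ring)

lemma ipf_monomial_right (f : FockPoly) (m : ℕ →₀ ℕ) :
    ipF f (monomial m 1) = MvPolynomial.coeff m f * wMon m := by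
  classical
  rw [ipf_eq_sum f _ (le_refl f.support)]
  by_cases hm : m ∈ f.support
  · rw [Finset.sum_eq_single m]
    · rw [MvPolynomial.coeff_monomial, if_pos rfl, mul_one]
    · intro b _ hb
      rw [MvPolynomial.coeff_monomial, if_neg (fun h => hb h.symm)]
      ring
    · intro h; exact absurd hm h
  · rw [Finset.sum_eq_zero, MvPolynomial.notMem_support_iff.1 hm, zero_mul]
    intro b hb
    rw [MvPolynomial.coeff_monomial, if_neg]
    · ring
    · intro h; rw [h] at hm; exact hm hb

lemma ipf_mono_mono (x y : ℕ →₀ ℕ) :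
    ipF (monomial x 1) (monomial y 1) = if x = y then wMon x else 0 := by
  classical
  rw [ipf_monomial_right, MvPolynomial.coeff_monomial]
  split_ifs with h
  · rw [one_mul, h]
  · rw [zero_mul]

lemma ipf_sum_left {ι : Type*} (T : Finset ι) (f : ι → FockPoly) (g : FockPoly) :
    ipF (∑ i ∈ T, f i) g = ∑ i ∈ T, ipF (f i) g := by
  classical
  set U := (T.biUnion fun i => (f i).support) ∪ (∑ i ∈ T, f i).support with hU
  rw [ipf_eq_sum _ g (Finset.subset_union_right)]
  have : ∀ i ∈ T, ipF (f i) g = ∑ m ∈ U, MvPolynomial.coeff m (f i) * MvPolynomial.coeff m g * wMon m := by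
    intro i hi
    refine ipf_eq_sum _ g ?_
    refine subset_trans ?_ (Finset.subset_union_left)
    intro m hm
    exact Finset.mem_biUnion.2 ⟨i, hi, hm⟩
  rw [Finset.sum_congr rfl this, Finset.sum_comm]
  refine Finset.sum_congr rfl (fun m _ => ?_)
  rw [← Finset.sum_mul, ← Finset.sum_mul]
  congr 2
  rw [← MvPolynomial.coeff_sum]

lemma ipf_smul_left (r : ℝ) (f g : FockPoly) : ipF (r • f) g = r * ipF f g := by
  have hsup : (r • f).support ⊆ f.support := MvPolynomial.support_smul
  rw [ipf_eq_sum _ g hsup, ipf_eq_sum f g (le_refl _), Finset.mul_sum]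
  refine Finset.sum_congr rfl (fun m _ => ?_)
  rw [MvPolynomial.coeff_smul]
  simp only [smul_eq_mul]
  ring

lemma ipf_sum_right {ι : Type*} (T : Finset ι) (g : ι → FockPoly) (f : FockPoly) :
    ipF f (∑ i ∈ T, g i) = ∑ i ∈ T, ipF f (g i) := by
  rw [ipf_comm, ipf_sum_left]
  exact Finset.sum_congr rfl (fun i _ => ipf_comm _ _)

lemma ipf_smul_right (r : ℝ) (f g : FockPoly) : ipF f (r • g) = r * ipF f g := by
  rw [ipf_comm, ipf_smul_left, ipf_comm]

end IP
section Deg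

lemma lowerB_apply (M : ℕ) (f : FockPoly) :
    lowerB M f = ∑ i ∈ Sev M, MvPolynomial.pderiv i f := by
  rw [lowerB, Sev, LinearMap.sum_apply]
  rfl

lemma totalDegree_pderiv_lt {f : FockPoly} (hf : 0 < f.totalDegree) (i : ℕ) :
    (MvPolynomial.pderiv i f).totalDegree < f.totalDegree := by
  classical
  conv_lhs => rw [MvPolynomial.as_sum f]
  rw [map_sum]
  refine lt_of_le_of_lt (MvPolynomial.totalDegree_finset_sum _ _) ?_
  rw [Finset.sup_lt_iff (by simpa using hf)]
  intro m hm
  rw [MvPolynomial.pderiv_monomial]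
  by_cases hmi : m i = 0
  · rw [hmi]
    norm_num
    exact hf
  · have hle : Finsupp.single i 1 ≤ m := by
      rw [Finsupp.le_def]
      intro j
      rcases eq_or_ne j i with rfl | hj
      · simpa using Nat.one_le_iff_ne_zero.2 hmi
      · simp [Finsupp.single_apply, Ne.symm hj]
    have hc : MvPolynomial.coeff m f * ((m i : ℝ)) ≠ 0 := by
      have h1 : MvPolynomial.coeff m f ≠ 0 := MvPolynomial.mem_support_iff.1 hm
      have h2 : ((m i : ℝ)) ≠ 0 := Nat.cast_ne_zero.2 hmi
      exact mul_ne_zero h1 h2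
    rw [MvPolynomial.totalDegree_monomial _ hc]
    have hsum : m.sum (fun _ e => e) = (m - Finsupp.single i 1).sum (fun _ e => e) + 1 := by
      have h3 : (m - Finsupp.single i 1) + Finsupp.single i 1 = m :=
        tsub_add_cancel_of_le hle
      conv_lhs => rw [← h3]
      rw [Finsupp.sum_add_index' (fun _ => rfl) (fun _ _ _ => rfl)]
      rw [Finsupp.sum_single_index rfl]
    have hm' : m.sum (fun _ e => e) ≤ f.totalDegree := MvPolynomial.le_totalDegree hm
    omega

lemma lowerB_deg_lt {f : FockPoly} (M : ℕ) (hf : 0 < f.totalDegree) :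
    (lowerB M f).totalDegree < f.totalDegree := by
  rw [lowerB_apply]
  refine lt_of_le_of_lt (MvPolynomial.totalDegree_finset_sum _ _) ?_
  rw [Finset.sup_lt_iff (by simpa using hf)]
  intro i _
  exact totalDegree_pderiv_lt hf i

lemma lowerB_of_deg_zero {f : FockPoly} (M : ℕ) (hf : f.totalDegree = 0) :
    lowerB M f = 0 := by
  rw [MvPolynomial.totalDegree_eq_zero_iff] at hf
  rw [lowerB_apply]
  refine Finset.sum_eq_zero (fun i _ => ?_)
  conv_lhs => rw [MvPolynomial.as_sum f]
  rw [map_sum]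
  refine Finset.sum_eq_zero (fun m hm => ?_)
  rw [MvPolynomial.pderiv_monomial, hf m hm i]
  simp

lemma lowerB_deg_le (M : ℕ) (f : FockPoly) :
    (lowerB M f).totalDegree ≤ f.totalDegree := by
  rcases Nat.eq_zero_or_pos f.totalDegree with h | h
  · rw [lowerB_of_deg_zero M h]
    simp
  · exact le_of_lt (lowerB_deg_lt M h)

lemma Bpow_eq_zero {f : FockPoly} (M : ℕ) {j : ℕ} (h : f.totalDegree < j) :
    ((lowerB M) ^ j) f = 0 := by
  induction j generalizing f with
  | zero => omega
  | succ k ih =>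
    rw [pow_succ, Module.End.mul_apply]
    rcases Nat.eq_zero_or_pos f.totalDegree with h0 | h0
    · rw [lowerB_of_deg_zero M h0, map_zero]
    · exact ih (lt_of_lt_of_le (lowerB_deg_lt M h0) (by omega))

lemma Bpow_deg_le (M : ℕ) (j : ℕ) (f : FockPoly) :
    (((lowerB M) ^ j) f).totalDegree ≤ f.totalDegree := by
  induction j generalizing f with
  | zero => simp
  | succ k ih =>
    rw [pow_succ, Module.End.mul_apply]
    exact le_trans (ih (lowerB M f)) (lowerB_deg_le M f)

lemma expB_eq_sum (M : ℕ) (s : ℝ) (f : FockPoly) {N : ℕ} (h : f.totalDegree < N) :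
    expB M s f = ∑ j ∈ Finset.range N,
      ((j.factorial : ℝ)⁻¹ * s ^ j) • ((lowerB M) ^ j) f := by
  rw [expB]
  refine Finset.sum_subset ?_ ?_
  · intro j hj
    rw [Finset.mem_range] at hj ⊢
    omega
  · intro j _ hj
    rw [Finset.mem_range, not_lt] at hj
    rw [Bpow_eq_zero M (by omega), smul_zero]

lemma expB_deg_le (M : ℕ) (s : ℝ) (f : FockPoly) :
    (expB M s f).totalDegree ≤ f.totalDegree := by
  rw [expB]
  refine le_trans (MvPolynomial.totalDegree_finset_sum _ _) ?_
  refine Finset.sup_le (fun j _ => ?_)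
  exact le_trans (MvPolynomial.totalDegree_smul_le _ _) (Bpow_deg_le M j f)

lemma expB_add (M : ℕ) (s : ℝ) (f g : FockPoly) :
    expB M s (f + g) = expB M s f + expB M s g := by
  set N := f.totalDegree + g.totalDegree + 1 with hN
  have h1 : (f + g).totalDegree < N := by
    have h := MvPolynomial.totalDegree_add f g
    have h2 := le_max_iff.1 h
    rcases h2 with h2 | h2 <;> omega
  rw [expB_eq_sum M s (f+g) h1, expB_eq_sum M s f (N := N) (by omega),
    expB_eq_sum M s g (N := N) (by omega), ← Finset.sum_add_distrib]
  refine Finset.sum_congr rfl (fun j _ => ?_)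
  rw [map_add, smul_add]

lemma expB_smul (M : ℕ) (s : ℝ) (r : ℝ) (f : FockPoly) :
    expB M s (r • f) = r • expB M s f := by
  set N := f.totalDegree + 1 with hN
  have h1 : (r • f).totalDegree < N := by
    have h := MvPolynomial.totalDegree_smul_le r f
    omega
  rw [expB_eq_sum M s (r • f) h1, expB_eq_sum M s f (N := N) (by omega), Finset.smul_sum]
  refine Finset.sum_congr rfl (fun j _ => ?_)
  rw [map_smul]
  rw [smul_comm]

lemma expB_zero_poly (M : ℕ) (s : ℝ) : expB M s 0 = 0 := by
  rw [expB]
  refine Finset.sum_eq_zero (fun j _ => ?_)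
  rw [map_zero, smul_zero]

lemma expB_sum {ι : Type*} (M : ℕ) (s : ℝ) (T : Finset ι) (f : ι → FockPoly) :
    expB M s (∑ i ∈ T, f i) = ∑ i ∈ T, expB M s (f i) := by
  classical
  induction T using Finset.induction with
  | empty => simpa using expB_zero_poly M s
  | insert _ _ hx ih =>
    rw [Finset.sum_insert hx, expB_add, ih, Finset.sum_insert hx]

lemma expB_s_zero (M : ℕ) (f : FockPoly) : expB M 0 f = f := by
  rw [expB, Finset.sum_range_succ']
  simp only [pow_zero, pow_succ, mul_zero, zero_mul, zero_smul, Finset.sum_const_zero, zero_add]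
  norm_num

lemma expB_one_poly (M : ℕ) (s : ℝ) : expB M s 1 = 1 := by
  rw [expB]
  have h : (1 : FockPoly).totalDegree = 0 := by
    simpa using MvPolynomial.totalDegree_C (1:ℝ)
  rw [h]
  simp

end Deg
section Mul

lemma lowerB_mul (M : ℕ) (p q : FockPoly) :
    lowerB M (p * q) = lowerB M p * q + p * lowerB M q := by
  rw [lowerB_apply, lowerB_apply, lowerB_apply, Finset.sum_mul, Finset.mul_sum,
    ← Finset.sum_add_distrib]
  refine Finset.sum_congr rfl (fun i _ => ?_)
  exact MvPolynomial.pderiv_mul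

lemma Bpow_apply (M : ℕ) (n : ℕ) (f : FockPoly) :
    ((lowerB M) ^ n) f = (fun g => lowerB M g)^[n] f :=
  Module.End.pow_apply (lowerB M) n f

lemma Biter_mul (M : ℕ) (n : ℕ) (p q : FockPoly) :
    (fun g => lowerB M g)^[n] (p * q) =
      ∑ k ∈ Finset.range n.succ,
        (n.choose k •
          ((fun g => lowerB M g)^[n - k] p * (fun g => lowerB M g)^[k] q)) := by
  set D := fun g : FockPoly => lowerB M g with hD
  have hDsum : ∀ {ι : Type} (s : Finset ι) (f : ι → FockPoly),
      D (∑ k ∈ s, f k) = ∑ k ∈ s, D (f k) := fun s f => map_sum (lowerB M) f s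
  have hDsmul : ∀ (c : ℕ) (x : FockPoly), D (c • x) = c • D x := fun c x => map_nsmul _ c x
  have hDmul : ∀ (x y : FockPoly), D (x * y) = D x * y + x * D y := fun x y => lowerB_mul M x y
  induction n with
  | zero => simp
  | succ n IH =>
    calc
      D^[n + 1] (p * q) =
          D (∑ k ∈ Finset.range n.succ, n.choose k • (D^[n - k] p * D^[k] q)) := by
        rw [Function.iterate_succ_apply', IH]
      _ = (∑ k ∈ Finset.range n.succ,
            n.choose k • (D^[n - k + 1] p * D^[k] q)) +
          ∑ k ∈ Finset.range n.succ,
            n.choose k • (D^[n - k] p * D^[k + 1] q) := by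
        rw [hDsum]
        simp_rw [hDsmul, hDmul, smul_add, Finset.sum_add_distrib,
          ← Function.iterate_succ_apply' D]
      _ = (∑ k ∈ Finset.range n.succ,
                n.choose k.succ • (D^[n - k] p * D^[k + 1] q)) +
              1 • (D^[n + 1] p * D^[0] q) +
            ∑ k ∈ Finset.range n.succ, n.choose k • (D^[n - k] p * D^[k + 1] q) := ?_
      _ = ((∑ k ∈ Finset.range n.succ, n.choose k • (D^[n - k] p * D^[k + 1] q)) +
              ∑ k ∈ Finset.range n.succ,
                n.choose k.succ • (D^[n - k] p * D^[k + 1] q)) +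
            1 • (D^[n + 1] p * D^[0] q) := by
        rw [add_comm, add_assoc]
      _ = (∑ i ∈ Finset.range n.succ,
              (n + 1).choose (i + 1) • (D^[n + 1 - (i + 1)] p * D^[i + 1] q)) +
            1 • (D^[n + 1] p * D^[0] q) := by
        simp_rw [Nat.choose_succ_succ, Nat.succ_sub_succ, add_smul, Finset.sum_add_distrib]
      _ = ∑ k ∈ Finset.range n.succ.succ,
            n.succ.choose k • (D^[n.succ - k] p * D^[k] q) := by
        rw [Finset.sum_range_succ' _ n.succ, Nat.choose_zero_right, tsub_zero]
    congr
    refine (Finset.sum_range_succ' _ _).trans (congr_arg₂ (· + ·) ?_ ?_)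
    · rw [Finset.sum_range_succ, Nat.choose_succ_self, zero_smul, add_zero]
      refine Finset.sum_congr rfl fun k hk => ?_
      rw [Finset.mem_range] at hk
      congr
      omega
    · rw [Nat.choose_zero_right, tsub_zero]

lemma Bpow_mul (M : ℕ) (n : ℕ) (p q : FockPoly) :
    ((lowerB M) ^ n) (p * q) =
      ∑ k ∈ Finset.range n.succ,
        (n.choose k • (((lowerB M) ^ (n - k)) p * ((lowerB M) ^ k) q)) := by
  simp_rw [Bpow_apply]
  exact Biter_mul M n p q

/-- triangle / rectangle exchange -/
lemma triangle_sum {α : Type*} [AddCommMonoid α] (N : ℕ) (F : ℕ → ℕ → α)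
    (h1 : ∀ k l, N ≤ k → F k l = 0) (h2 : ∀ k l, N ≤ l → F k l = 0) :
    ∑ n ∈ Finset.range (2 * N), ∑ k ∈ Finset.range (n + 1), F k (n - k) =
      ∑ k ∈ Finset.range N, ∑ l ∈ Finset.range N, F k l := by
  classical
  rw [← Finset.sum_product']
  rw [Finset.sum_sigma']
  set T := (Finset.range (2*N) ×ˢ Finset.range (2*N)).filter (fun p => p.1 + p.2 < 2*N) with hT
  have step1 : ∑ x ∈ (Finset.range (2*N)).sigma (fun n => Finset.range (n+1)),
      F x.2 (x.1 - x.2) = ∑ p ∈ T, F p.1 p.2 := by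
    refine Finset.sum_nbij' (fun x => (x.2, x.1 - x.2)) (fun p => ⟨p.1 + p.2, p.1⟩) ?_ ?_ ?_ ?_ ?_
    · rintro ⟨n, k⟩ hx
      simp only [Finset.mem_sigma, Finset.mem_range] at hx
      simp only [hT, Finset.mem_filter, Finset.mem_product, Finset.mem_range]
      omega
    · rintro ⟨k, l⟩ hp
      simp only [hT, Finset.mem_filter, Finset.mem_product, Finset.mem_range] at hp
      simp only [Finset.mem_sigma, Finset.mem_range]
      omega
    · rintro ⟨n, k⟩ hx
      simp only [Finset.mem_sigma, Finset.mem_range] at hx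
      have h : k + (n - k) = n := by omega
      simp [h]
    · rintro ⟨k, l⟩ hp
      simp only [hT, Finset.mem_filter, Finset.mem_product, Finset.mem_range] at hp
      have h : k + l - k = l := by omega
      simp [h]
    · intro x _
      rfl
  rw [step1]
  rcases Nat.eq_zero_or_pos N with h | h
  · subst h; simp [hT]
  refine (Finset.sum_subset ?_ ?_).symm
  · intro p hp
    simp only [Finset.mem_product, Finset.mem_range] at hp
    simp only [hT, Finset.mem_filter, Finset.mem_product, Finset.mem_range]
    omega
  · intro p hp hnp
    simp only [hT, Finset.mem_filter, Finset.mem_product, Finset.mem_range] at hp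
    simp only [Finset.mem_product, Finset.mem_range] at hnp
    push_neg at hnp
    by_cases hk : N ≤ p.1
    · exact h1 p.1 p.2 hk
    · exact h2 p.1 p.2 (hnp (by omega))

lemma expB_mul (M : ℕ) (s : ℝ) (p q : FockPoly) :
    expB M s (p * q) = expB M s p * expB M s q := by
  have hN' : p.totalDegree + q.totalDegree + 1 = p.totalDegree + q.totalDegree + 1 := rfl
  set N := p.totalDegree + q.totalDegree + 1 with hN
  have hdeg : (p * q).totalDegree < 2 * N := by
    have h := MvPolynomial.totalDegree_mul p q
    omega
  rw [expB_eq_sum M s (p*q) (N := 2*N) hdeg,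
    expB_eq_sum M s p (N := N) (by omega), expB_eq_sum M s q (N := N) (by omega),
    Finset.sum_mul_sum]
  have key : ∀ n ∈ Finset.range (2*N),
      ((n.factorial : ℝ)⁻¹ * s ^ n) • ((lowerB M) ^ n) (p * q) =
      ∑ k ∈ Finset.range (n+1),
        (((k.factorial : ℝ)⁻¹ * s ^ k) • ((lowerB M) ^ k) p) *
          ((((n-k).factorial : ℝ)⁻¹ * s ^ (n-k)) • ((lowerB M) ^ (n-k)) q) := by
    intro n _
    rw [mul_comm p q, Bpow_mul, Finset.smul_sum]
    refine Finset.sum_congr rfl (fun k hk => ?_)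
    rw [Finset.mem_range] at hk
    have hkn : k ≤ n := by omega
    rw [smul_mul_smul_comm, ← Nat.cast_smul_eq_nsmul ℝ, smul_smul,
      mul_comm (((lowerB M) ^ (n-k)) q) (((lowerB M) ^ k) p)]
    congr 1
    have hchoose : (n.choose k : ℝ) =
        (n.factorial : ℝ) / ((k.factorial : ℝ) * ((n-k).factorial : ℝ)) :=
      Nat.cast_choose ℝ hkn
    have h1 : (k.factorial : ℝ) ≠ 0 := Nat.cast_ne_zero.2 (Nat.factorial_ne_zero k)
    have h2 : ((n-k).factorial : ℝ) ≠ 0 := Nat.cast_ne_zero.2 (Nat.factorial_ne_zero (n-k))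
    have h3 : (n.factorial : ℝ) ≠ 0 := Nat.cast_ne_zero.2 (Nat.factorial_ne_zero n)
    have hpow : s ^ k * s ^ (n - k) = s ^ n := by
      rw [← pow_add]
      congr 1
      omega
    rw [hchoose, ← hpow]
    field_simp
    try ring
  rw [Finset.sum_congr rfl key]
  have h1 : ∀ k l : ℕ, N ≤ k →
      (((k.factorial : ℝ)⁻¹ * s ^ k) • ((lowerB M) ^ k) p) *
        ((((l.factorial : ℝ)⁻¹ * s ^ l) • ((lowerB M) ^ l) q)) = 0 := by
    intro k l hk
    have hz : ((lowerB M) ^ k) p = 0 := Bpow_eq_zero M (by omega)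
    rw [hz, smul_zero, zero_mul]
  have h2 : ∀ k l : ℕ, N ≤ l →
      (((k.factorial : ℝ)⁻¹ * s ^ k) • ((lowerB M) ^ k) p) *
        ((((l.factorial : ℝ)⁻¹ * s ^ l) • ((lowerB M) ^ l) q)) = 0 := by
    intro k l hl
    have hz : ((lowerB M) ^ l) q = 0 := Bpow_eq_zero M (by omega)
    rw [hz, smul_zero, mul_zero]
  exact triangle_sum N _ h1 h2

lemma expB_comp (M : ℕ) (s t : ℝ) (f : FockPoly) :
    expB M s (expB M t f) = expB M (s + t) f := by
  set N := f.totalDegree + 1 with hN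
  have hd1 : (expB M t f).totalDegree < N := by
    have h := expB_deg_le M t f
    omega
  rw [expB_eq_sum M s _ (N := N) hd1]
  have inner : ∀ j : ℕ, ((lowerB M) ^ j) (expB M t f) =
      ∑ l ∈ Finset.range N, ((l.factorial : ℝ)⁻¹ * t ^ l) • ((lowerB M) ^ (j + l)) f := by
    intro j
    rw [expB_eq_sum M t f (N := N) (by omega), map_sum]
    refine Finset.sum_congr rfl (fun l _ => ?_)
    rw [map_smul, pow_add, Module.End.mul_apply]
  simp_rw [inner, Finset.smul_sum, smul_smul]
  rw [expB_eq_sum M (s+t) f (N := 2*N) (by omega)]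
  have key : ∀ n ∈ Finset.range (2*N),
      ((n.factorial : ℝ)⁻¹ * (s+t) ^ n) • ((lowerB M) ^ n) f =
      ∑ k ∈ Finset.range (n+1),
        ((((k.factorial : ℝ)⁻¹ * s ^ k)) * (((n-k).factorial : ℝ)⁻¹ * t ^ (n-k))) •
          ((lowerB M) ^ (k + (n - k))) f := by
    intro n _
    have hsum : ∀ k ∈ Finset.range (n+1), k + (n - k) = n := by
      intro k hk; rw [Finset.mem_range] at hk; omega
    have congr1 : ∀ k ∈ Finset.range (n+1),
        ((((k.factorial : ℝ)⁻¹ * s ^ k)) * (((n-k).factorial : ℝ)⁻¹ * t ^ (n-k))) •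
          ((lowerB M) ^ (k + (n - k))) f =
        ((((k.factorial : ℝ)⁻¹ * s ^ k)) * (((n-k).factorial : ℝ)⁻¹ * t ^ (n-k))) •
          ((lowerB M) ^ n) f := by
      intro k hk
      rw [hsum k hk]
    rw [Finset.sum_congr rfl congr1, ← Finset.sum_smul]
    congr 1
    rw [add_pow, Finset.mul_sum]
    refine (Finset.sum_congr rfl ?_).symm
    intro k hk
    rw [Finset.mem_range] at hk
    have hkn : k ≤ n := by omega
    have hchoose : (n.choose k : ℝ) =
        (n.factorial : ℝ) / ((k.factorial : ℝ) * ((n-k).factorial : ℝ)) :=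
      Nat.cast_choose ℝ hkn
    have h1 : (k.factorial : ℝ) ≠ 0 := Nat.cast_ne_zero.2 (Nat.factorial_ne_zero k)
    have h2 : ((n-k).factorial : ℝ) ≠ 0 := Nat.cast_ne_zero.2 (Nat.factorial_ne_zero (n-k))
    have h3 : (n.factorial : ℝ) ≠ 0 := Nat.cast_ne_zero.2 (Nat.factorial_ne_zero n)
    rw [hchoose]
    field_simp
    try ring
  rw [Finset.sum_congr rfl key]
  have h1 : ∀ k l : ℕ, N ≤ k →
      ((((k.factorial : ℝ)⁻¹ * s ^ k)) * (((l.factorial : ℝ)⁻¹ * t ^ l))) •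
        ((lowerB M) ^ (k + l)) f = 0 := by
    intro k l hk
    have hz : ((lowerB M) ^ (k + l)) f = 0 := Bpow_eq_zero M (by omega)
    rw [hz, smul_zero]
  have h2 : ∀ k l : ℕ, N ≤ l →
      ((((k.factorial : ℝ)⁻¹ * s ^ k)) * (((l.factorial : ℝ)⁻¹ * t ^ l))) •
        ((lowerB M) ^ (k + l)) f = 0 := by
    intro k l hl
    have hz : ((lowerB M) ^ (k + l)) f = 0 := Bpow_eq_zero M (by omega)
    rw [hz, smul_zero]
  exact (triangle_sum N _ h1 h2).symm

lemma expB_cancel (M : ℕ) (u : FockPoly) : expB M 1 (expB M (-1) u) = u := by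
  rw [expB_comp]
  norm_num
  exact expB_s_zero M u

lemma expB_cancel' (M : ℕ) (u : FockPoly) : expB M (-1) (expB M 1 u) = u := by
  rw [expB_comp]
  norm_num
  exact expB_s_zero M u

end Mul
section Split

lemma le_single_add_iff {i k : ℕ} {m' : ℕ →₀ ℕ} (hm' : m' i = 0) (x : ℕ →₀ ℕ) :
    x ≤ Finsupp.single i k + m' ↔ x i ≤ k ∧ Finsupp.erase i x ≤ m' := by
  classical
  rw [Finsupp.le_def]
  constructor
  · intro h
    constructor
    · have := h i
      rwa [Finsupp.add_apply, Finsupp.single_apply, if_pos rfl, hm', add_zero] at this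
    · rw [Finsupp.le_def]
      intro j
      rcases eq_or_ne j i with rfl | hj
      · rw [Finsupp.erase_apply, if_pos rfl]
        exact Nat.zero_le _
      · have hthis := h j
        rw [Finsupp.add_apply, Finsupp.single_apply, if_neg (Ne.symm hj), zero_add] at hthis
        rw [Finsupp.erase_apply, if_neg hj]
        exact hthis
  · rintro ⟨h1, h2⟩ j
    rcases eq_or_ne j i with rfl | hj
    · rw [Finsupp.add_apply, Finsupp.single_apply, if_pos rfl, hm', add_zero]
      exact h1
    · have := Finsupp.le_def.1 h2 j
      rw [Finsupp.erase_apply, if_neg hj] at this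
      rwa [Finsupp.add_apply, Finsupp.single_apply, if_neg (Ne.symm hj), zero_add]

lemma apply_eq_zero_of_le {y m' : ℕ →₀ ℕ} (h : y ≤ m') {i : ℕ} (hm' : m' i = 0) : y i = 0 := by
  have := Finsupp.le_def.1 h i
  omega

lemma split_Iic {α : Type*} [AddCommMonoid α] (i k : ℕ) (m' : ℕ →₀ ℕ) (hm' : m' i = 0)
    (F : (ℕ →₀ ℕ) → α) :
    ∑ x ∈ Finset.Iic (Finsupp.single i k + m'), F x =
      ∑ t ∈ Finset.range (k + 1), ∑ y ∈ Finset.Iic m', F (Finsupp.single i t + y) := by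
  classical
  rw [← Finset.sum_product']
  refine Finset.sum_nbij' (fun x => (x i, Finsupp.erase i x))
    (fun p => Finsupp.single i p.1 + p.2) ?_ ?_ ?_ ?_ ?_
  · intro x hx
    rw [Finset.mem_Iic, le_single_add_iff hm'] at hx
    simp only [Finset.mem_product, Finset.mem_range, Finset.mem_Iic]
    exact ⟨by omega, hx.2⟩
  · rintro ⟨t, y⟩ hp
    simp only [Finset.mem_product, Finset.mem_range, Finset.mem_Iic] at hp
    rw [Finset.mem_Iic, le_single_add_iff hm']
    have hyi : y i = 0 := apply_eq_zero_of_le hp.2 hm'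
    constructor
    · rw [Finsupp.add_apply, Finsupp.single_apply, if_pos rfl, hyi, add_zero]
      omega
    · rw [Finsupp.erase_add, Finsupp.erase_single, zero_add,
        Finsupp.erase_of_notMem_support (Finsupp.notMem_support_iff.2 hyi)]
      exact hp.2
  · intro x hx
    dsimp only
    exact Finsupp.single_add_erase i x
  · rintro ⟨t, y⟩ hp
    simp only [Finset.mem_product, Finset.mem_range, Finset.mem_Iic] at hp
    have hyi : y i = 0 := apply_eq_zero_of_le hp.2 hm'
    dsimp only
    rw [Finsupp.add_apply, Finsupp.single_apply, if_pos rfl, hyi, add_zero,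
      Finsupp.erase_add, Finsupp.erase_single, zero_add,
      Finsupp.erase_of_notMem_support (Finsupp.notMem_support_iff.2 hyi)]
  · intro x hx
    dsimp only
    rw [Finsupp.single_add_erase]

lemma prod_sum_Iic (T : ℕ → ℕ → ℝ) :
    ∀ (U : Finset ℕ) (a : ℕ →₀ ℕ), a.support ⊆ U →
    ∏ i ∈ U, (∑ x ∈ Finset.range (a i + 1), T i x) =
      ∑ x ∈ Finset.Iic a, ∏ i ∈ U, T i (x i) := by
  classical
  intro U
  induction U using Finset.induction with
  | empty =>
    intro a ha
    have : a = 0 := Finsupp.support_eq_empty.1 (Finset.subset_empty.1 ha)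
    subst this
    rw [show Finset.Iic (0 : ℕ →₀ ℕ) = {0} from rfl]
    simp
  | @insert j U' hj IH =>
    intro a ha
    have hdecomp : Finsupp.single j (a j) + Finsupp.erase j a = a :=
      Finsupp.single_add_erase j a
    have herase_supp : (Finsupp.erase j a).support ⊆ U' := by
      rw [Finsupp.support_erase]
      intro x hx
      rw [Finset.mem_erase] at hx
      have := ha hx.2
      rw [Finset.mem_insert] at this
      tauto
    have herase_j : (Finsupp.erase j a) j = 0 := by
      rw [Finsupp.erase_apply, if_pos rfl]
    rw [Finset.prod_insert hj]
    have congr_tail : ∏ i ∈ U', (∑ x ∈ Finset.range (a i + 1), T i x) =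
        ∑ y ∈ Finset.Iic (Finsupp.erase j a), ∏ i ∈ U', T i (y i) := by
      have : ∀ i ∈ U', a i = (Finsupp.erase j a) i := by
        intro i hi
        rw [Finsupp.erase_apply, if_neg]
        intro h; rw [h] at hi; exact hj hi
      rw [Finset.prod_congr rfl (fun i hi => by rw [this i hi])]
      exact IH _ herase_supp
    rw [congr_tail]
    conv_rhs => rw [← hdecomp]
    rw [split_Iic j (a j) (Finsupp.erase j a) herase_j]
    rw [Finset.sum_mul_sum]
    refine Finset.sum_congr rfl (fun t ht => ?_)
    refine Finset.sum_congr rfl (fun y hy => ?_)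
    rw [Finset.mem_Iic] at hy
    have hyj : y j = 0 := apply_eq_zero_of_le hy herase_j
    rw [Finset.prod_insert hj]
    congr 1
    · congr 1
      rw [Finsupp.add_apply, Finsupp.single_apply, if_pos rfl, hyj, add_zero]
    · refine Finset.prod_congr rfl (fun i hi => ?_)
      congr 1
      rw [Finsupp.add_apply, Finsupp.single_apply, if_neg, zero_add]
      intro h; subst h; exact hj hi

end Split
section ClaimD

lemma wMon_add_single (i t : ℕ) (y : ℕ →₀ ℕ) (hy : y i = 0) :
    wMon (Finsupp.single i t + y) = wk i t * wMon y := by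
  classical
  have hysupp : i ∉ y.support := Finsupp.notMem_support_iff.2 hy
  have hsub : (Finsupp.single i t + y).support ⊆ insert i y.support := by
    refine subset_trans Finsupp.support_add ?_
    intro x hx
    rcases Finset.mem_union.1 hx with h | h
    · have := Finsupp.support_single_subset h
      rw [Finset.mem_singleton] at this
      exact Finset.mem_insert.2 (Or.inl this)
    · exact Finset.mem_insert.2 (Or.inr h)
  rw [wMon_eq_prod _ hsub, Finset.prod_insert hysupp]
  congr 1
  · rw [Finsupp.add_apply, Finsupp.single_apply, if_pos rfl, hy, add_zero]
  · rw [wMon_eq_prod y (le_refl _)]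
    refine Finset.prod_congr rfl (fun j hj => ?_)
    have hji : j ≠ i := fun h => hysupp (h ▸ hj)
    rw [Finsupp.add_apply, Finsupp.single_apply, if_neg (Ne.symm hji), zero_add]

lemma phiP_add_single (M : ℕ) (r : ℝ) (i t k : ℕ) (y m' : ℕ →₀ ℕ)
    (hy : y i = 0) (hm' : m' i = 0) :
    phiP M r (Finsupp.single i t + y) (Finsupp.single i k + m') =
      gk M r i t k * phiP M r y m' := by
  classical
  have hnotin : i ∉ y.support ∪ m'.support := by
    rw [Finset.mem_union]
    push_neg
    exact ⟨Finsupp.notMem_support_iff.2 hy, Finsupp.notMem_support_iff.2 hm'⟩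
  have hsub1 : (Finsupp.single i t + y).support ∪ (Finsupp.single i k + m').support ⊆
      insert i (y.support ∪ m'.support) := by
    intro x hx
    rcases Finset.mem_union.1 hx with h | h <;>
    · rcases Finset.mem_union.1 (Finsupp.support_add h) with h2 | h2
      · have := Finsupp.support_single_subset h2
        rw [Finset.mem_singleton] at this
        exact Finset.mem_insert.2 (Or.inl this)
      · refine Finset.mem_insert.2 (Or.inr ?_)
        first
          | exact Finset.mem_union.2 (Or.inl h2)
          | exact Finset.mem_union.2 (Or.inr h2)
  rw [phiP_eq_prod M r _ _ hsub1, Finset.prod_insert hnotin]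
  have happ1 : (Finsupp.single i t + y) i = t := by
    rw [Finsupp.add_apply, Finsupp.single_apply, if_pos rfl, hy, add_zero]
  have happ2 : (Finsupp.single i k + m') i = k := by
    rw [Finsupp.add_apply, Finsupp.single_apply, if_pos rfl, hm', add_zero]
  rw [happ1, happ2]
  congr 1
  rw [phiP]
  refine Finset.prod_congr rfl (fun j hj => ?_)
  have hji : j ≠ i := fun h => hnotin (h ▸ hj)
  rw [Finsupp.add_apply, Finsupp.single_apply, if_neg (Ne.symm hji), zero_add,
    Finsupp.add_apply, Finsupp.single_apply, if_neg (Ne.symm hji), zero_add]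

lemma wk_gk_ratio (M : ℕ) (s : ℝ) (i t k : ℕ) (ht : t ≤ k) :
    wk i k * gk M s i t k / wk i t =
      (if i ∈ Sev M then s else 0) ^ (k - t) * (k.choose t : ℝ) := by
  rw [gk, wk, wk]
  by_cases hi : i ∈ Sev M
  · rw [if_pos hi, if_pos hi, if_pos ht]
    have h1 : ((i:ℝ) + 1) ≠ 0 := by positivity
    have h2 : ((k - t).factorial : ℝ) ≠ 0 := Nat.cast_ne_zero.2 (Nat.factorial_ne_zero _)
    have h3 : ((t).factorial : ℝ) ≠ 0 := Nat.cast_ne_zero.2 (Nat.factorial_ne_zero _)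
    have hpow : ((i:ℝ) + 1) ^ k = ((i:ℝ)+1) ^ t * ((i:ℝ)+1) ^ (k - t) := by
      rw [← pow_add]
      congr 1
      omega
    have hchoose : (k.choose t : ℝ) =
        (k.factorial : ℝ) / ((t.factorial : ℝ) * ((k-t).factorial : ℝ)) :=
      Nat.cast_choose ℝ ht
    rw [mul_pow, hpow, hchoose, lamq]
    have h4 : ((i:ℝ) + 1) ^ (k - t) ≠ 0 := by positivity
    field_simp
    ring_nf
    rw [mul_assoc, ← mul_pow, inv_mul_cancel₀ (by positivity), one_pow, mul_one]
  · rw [if_neg hi, if_neg hi]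
    by_cases htk : t = k
    · rw [if_pos htk, htk, Nat.sub_self, pow_zero, Nat.choose_self]
      have h0 : ((i:ℝ)+1)^k * (k.factorial:ℝ) ≠ 0 := by positivity
      field_simp
      norm_num
    · rw [if_neg htk]
      have : 0 < k - t := by omega
      rw [zero_pow (by omega : k - t ≠ 0)]
      simp

lemma expB_X (M : ℕ) (s : ℝ) (i : ℕ) :
    expB M s (MvPolynomial.X i) = MvPolynomial.X i +
      MvPolynomial.C (if i ∈ Sev M then s else 0) := by
  classical
  have hB : lowerB M (MvPolynomial.X i) = MvPolynomial.C (if i ∈ Sev M then (1:ℝ) else 0) := by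
    rw [lowerB_apply]
    by_cases hi : i ∈ Sev M
    · rw [Finset.sum_eq_single i]
      · rw [MvPolynomial.pderiv_X, Pi.single_eq_same, if_pos hi, MvPolynomial.C_1]
      · intro j _ hji
        rw [MvPolynomial.pderiv_X, Pi.single_eq_of_ne (Ne.symm hji)]
      · intro h; exact absurd hi h
    · rw [if_neg hi, MvPolynomial.C_0]
      refine Finset.sum_eq_zero (fun j hj => ?_)
      have hji : j ≠ i := fun h => hi (h ▸ hj)
      rw [MvPolynomial.pderiv_X, Pi.single_eq_of_ne (Ne.symm hji)]
  have hdeg : (MvPolynomial.X i : FockPoly).totalDegree < 2 := by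
    rw [MvPolynomial.totalDegree_X]
    omega
  rw [expB_eq_sum M s _ (N := 2) hdeg]
  rw [Finset.sum_range_succ, Finset.sum_range_one]
  rw [pow_zero (lowerB M), pow_one (lowerB M), Module.End.one_apply, hB]
  rw [pow_zero s, pow_one s, Nat.factorial_zero, Nat.factorial_one]
  norm_num
  split_ifs <;> simp [MvPolynomial.smul_eq_C_mul]

lemma expB_pow (M : ℕ) (s : ℝ) (p : FockPoly) (k : ℕ) :
    expB M s (p ^ k) = (expB M s p) ^ k := by
  induction k with
  | zero => simpa using expB_one_poly M s
  | succ n ih => rw [pow_succ, expB_mul, ih, pow_succ]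

lemma expB_monomial (M : ℕ) (s : ℝ) (m : ℕ →₀ ℕ) :
    expB M s (MvPolynomial.monomial m 1) =
      ∑ x ∈ Finset.Iic m, (wMon m * phiP M s x m / wMon x) • MvPolynomial.monomial x 1 := by
  classical
  induction m using Finsupp.induction with
  | zero =>
    rw [show Finset.Iic (0 : ℕ →₀ ℕ) = {0} from rfl]
    rw [Finset.sum_singleton]
    have h1 : (MvPolynomial.monomial (0 : ℕ →₀ ℕ) (1:ℝ) : FockPoly) = 1 := by
      rw [MvPolynomial.monomial_zero']
      exact MvPolynomial.C_1
    rw [h1, expB_one_poly]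
    rw [wMon_zero]
    have hphi : phiP M s 0 0 = 1 := by
      rw [phiP]
      simp
    rw [hphi]
    norm_num
  | single_add i k m' hi hk IH =>
    have hm'i : m' i = 0 := Finsupp.notMem_support_iff.1 hi
    have hsplit : (MvPolynomial.monomial (Finsupp.single i k + m') (1:ℝ) : FockPoly) =
        (MvPolynomial.X i) ^ k * MvPolynomial.monomial m' 1 := by
      rw [MvPolynomial.X_pow_eq_monomial, MvPolynomial.monomial_mul, one_mul]
    rw [hsplit, expB_mul, expB_pow, expB_X, IH]
    set E := (if i ∈ Sev M then s else 0) with hE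
    rw [add_pow]
    rw [Finset.sum_mul_sum]
    rw [split_Iic i k m' hm'i]
    refine Finset.sum_congr rfl (fun t ht => ?_)
    refine Finset.sum_congr rfl (fun y hy => ?_)
    rw [Finset.mem_range] at ht
    rw [Finset.mem_Iic] at hy
    have hyi : y i = 0 := apply_eq_zero_of_le hy hm'i
    have htk : t ≤ k := by omega
    -- LHS term: (X i ^ t * C E ^ (k - t) * choose) * (c_y • monomial y 1)
    rw [← MvPolynomial.C_pow]
    have hXt : (MvPolynomial.X i : FockPoly) ^ t = MvPolynomial.monomial (Finsupp.single i t) 1 :=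
      MvPolynomial.X_pow_eq_monomial
    have hnat : ((k.choose t : ℕ) : FockPoly) = MvPolynomial.C ((k.choose t : ℕ) : ℝ) := by
      rw [MvPolynomial.C_eq_coe_nat]
    rw [hXt, hnat]
    rw [MvPolynomial.smul_eq_C_mul, MvPolynomial.smul_eq_C_mul]
    have collect :
        MvPolynomial.monomial (R := ℝ) (Finsupp.single i t) 1 * MvPolynomial.C (E ^ (k - t)) *
            MvPolynomial.C ((k.choose t : ℕ) : ℝ) *
            (MvPolynomial.C (wMon m' * phiP M s y m' / wMon y) *
              MvPolynomial.monomial y 1) =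
          MvPolynomial.C (E ^ (k - t) * ((k.choose t : ℕ) : ℝ) *
              (wMon m' * phiP M s y m' / wMon y)) *
            MvPolynomial.monomial (Finsupp.single i t + y) 1 := by
      calc MvPolynomial.monomial (R := ℝ) (Finsupp.single i t) 1 * MvPolynomial.C (E ^ (k - t)) *
            MvPolynomial.C ((k.choose t : ℕ) : ℝ) *
            (MvPolynomial.C (wMon m' * phiP M s y m' / wMon y) *
              MvPolynomial.monomial y 1)
          = (MvPolynomial.C (E ^ (k - t)) * MvPolynomial.C ((k.choose t : ℕ) : ℝ) *
              MvPolynomial.C (wMon m' * phiP M s y m' / wMon y)) *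
            (MvPolynomial.monomial (R := ℝ) (Finsupp.single i t) 1 *
              MvPolynomial.monomial y 1) := by ring
        _ = _ := by
            rw [MvPolynomial.monomial_mul, one_mul, ← MvPolynomial.C_mul, ← MvPolynomial.C_mul]
            try ring
    rw [collect]
    congr 2
    -- scalar identity
    rw [wMon_add_single i t y hyi, wMon_add_single i k m' hm'i,
      phiP_add_single M s i t k y m' hyi hm'i]
    have hr := wk_gk_ratio M s i t k htk
    rw [← hE] at hr
    have hwk_t : wk i t ≠ 0 := wk_ne i t
    have hwk_k : wk i k ≠ 0 := wk_ne i k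
    have hwy : wMon y ≠ 0 := wMon_ne y
    field_simp at hr ⊢
    linear_combination (-(wMon m' * phiP M s y m')) * hr

lemma ipf_expB_monomial (M : ℕ) (s : ℝ) (f : FockPoly) (m : ℕ →₀ ℕ) :
    ipF f (expB M s (MvPolynomial.monomial m 1)) =
      wMon m * ∑ a ∈ f.support, MvPolynomial.coeff a f * phiP M s a m := by
  classical
  rw [expB_monomial, ipf_sum_right]
  have step : ∀ x ∈ Finset.Iic m,
      ipF f ((wMon m * phiP M s x m / wMon x) • MvPolynomial.monomial x 1) =
        wMon m * (MvPolynomial.coeff x f * phiP M s x m) := by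
    intro x _
    rw [ipf_smul_right, ipf_monomial_right]
    have := wMon_ne x
    field_simp
  rw [Finset.sum_congr rfl step, ← Finset.mul_sum]
  congr 1
  have h1 : ∑ x ∈ Finset.Iic m, MvPolynomial.coeff x f * phiP M s x m
      = ∑ x ∈ Finset.Iic m ∪ f.support, MvPolynomial.coeff x f * phiP M s x m := by
    refine Finset.sum_subset Finset.subset_union_left ?_
    intro x _ hxm
    rw [phiP_eq_zero_of_not_le M s (fun h => hxm (Finset.mem_Iic.2 h))]
    ring
  have h2 : ∑ x ∈ f.support, MvPolynomial.coeff x f * phiP M s x m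
      = ∑ x ∈ Finset.Iic m ∪ f.support, MvPolynomial.coeff x f * phiP M s x m := by
    refine Finset.sum_subset Finset.subset_union_right ?_
    intro x _ hxf
    rw [MvPolynomial.notMem_support_iff.1 hxf]
    ring
  rw [h1, ← h2]

end ClaimD
section Vander

lemma vander (M : ℕ) (s : ℝ) (i A B K : ℕ) :
    wk i K * gk M s i A K * gk M s i B K =
      ∑ x ∈ Finset.range (A + 1),
        wk i A * wk i B / wk i x * gk M s i x A * gk M s i x B *
          gk M (s * s) i (A + B - x) K := by
  classical
  by_cases hi : i ∈ Sev M
  · -- main case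
    by_cases hAB : A ≤ K ∧ B ≤ K
    · obtain ⟨hA, hB⟩ := hAB
      -- termwise identification with Vandermonde terms
      have hterm : ∀ x ∈ Finset.range (A + 1),
          wk i A * wk i B / wk i x * gk M s i x A * gk M s i x B *
            gk M (s * s) i (A + B - x) K =
          ((s * lamq i) ^ (K - A) * (s * lamq i) ^ (K - B) * ((i:ℝ)+1) ^ K) *
            ((B.choose x : ℝ) * (((K - B).choose (A - x) : ℝ)) *
              (A.factorial : ℝ) / ((K - B).factorial : ℝ)) := by
        intro x hx
        rw [Finset.mem_range] at hx
        have hxA : x ≤ A := by omega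
        by_cases hxB : x ≤ B
        · by_cases hK : A + B - x ≤ K
          · -- all guards hold
            obtain ⟨a, ha⟩ : ∃ a, A = x + a := ⟨A - x, by omega⟩
            obtain ⟨b, hb⟩ : ∃ b, B = x + b := ⟨B - x, by omega⟩
            obtain ⟨c, hc⟩ : ∃ c, K = x + a + b + c := ⟨K - (A + B - x), by omega⟩
            subst ha hb hc
            have e1 : x + a - x = a := by omega
            have e2 : x + b - x = b := by omega
            have e3 : x + a + b + c - (x + a) = b + c := by omega
            have e4 : x + a + b + c - (x + b) = a + c := by omega
            have e5 : (x + a) + (x + b) - x = x + a + b := by omega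
            have e6 : x + a + b + c - (x + a + b) = c := by omega
            rw [gk, gk, gk, if_pos hi, if_pos hi, if_pos hi,
              if_pos (by omega : x ≤ x + a), if_pos (by omega : x ≤ x + b), e5,
              if_pos (by omega : x + a + b ≤ x + a + b + c), e1, e2, e6, e3, e4]
            have hch1 : (((x + b)).choose x : ℝ) =
                ((x+b).factorial : ℝ) / ((x.factorial : ℝ) * (b.factorial : ℝ)) := by
              rw [Nat.cast_choose ℝ (by omega : x ≤ x + b),
                show x + b - x = b from by omega]
            have hch2 : (((a + c)).choose a : ℝ) =
                ((a+c).factorial : ℝ) / ((a.factorial : ℝ) * (c.factorial : ℝ)) := by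
              rw [Nat.cast_choose ℝ (by omega : a ≤ a + c),
                show a + c - a = c from by omega]
            rw [hch1, hch2, wk, wk, wk, lamq]
            have h1 : ((i:ℝ) + 1) ≠ 0 := by positivity
            have hf : ∀ n : ℕ, (n.factorial : ℝ) ≠ 0 :=
              fun n => Nat.cast_ne_zero.2 (Nat.factorial_ne_zero n)
            have hfa := hf a; have hfb := hf b; have hfc := hf c
            have hfx := hf x
            have hfxa := hf (x+a); have hfxb := hf (x+b); have hfac := hf (a+c)
            have hsl : ∀ n : ℕ, (s * ((i:ℝ)+1)⁻¹) ^ n = s ^ n * (((i:ℝ)+1) ^ n)⁻¹ := by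
              intro n; rw [mul_pow, inv_pow]
            have hssl : ((s*s) * ((i:ℝ)+1)⁻¹) ^ c = s^c * s^c * (((i:ℝ)+1)^c)⁻¹ := by
              rw [mul_pow, inv_pow, mul_pow]
            rw [hsl a, hsl b, hsl (b+c), hsl (a+c), hssl]
            rw [pow_add s b c, pow_add s a c, pow_add ((i:ℝ)+1) x a, pow_add ((i:ℝ)+1) x b,
              pow_add ((i:ℝ)+1) b c, pow_add ((i:ℝ)+1) a c,
              show ((i:ℝ)+1)^(x+a+b+c) =
                ((i:ℝ)+1)^x * ((i:ℝ)+1)^a * ((i:ℝ)+1)^b * ((i:ℝ)+1)^c from by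
                  rw [← pow_add, ← pow_add, ← pow_add]]
            have hp : ∀ n : ℕ, ((i:ℝ)+1) ^ n ≠ 0 := fun n => by positivity
            field_simp
          · -- A + B - x > K : both sides vanish
            have hz : gk M (s*s) i (A + B - x) K = 0 := by
              rw [gk, if_pos hi, if_neg hK]
            rw [hz, mul_zero]
            have : (K - B).choose (A - x) = 0 := Nat.choose_eq_zero_of_lt (by omega)
            rw [this]
            push_cast
            ring
        · -- x > B
          have hz : gk M s i x B = 0 := by
            rw [gk, if_pos hi, if_neg hxB]
          rw [hz, mul_zero, zero_mul]
          have : B.choose x = 0 := Nat.choose_eq_zero_of_lt (by omega)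
          rw [this]
          push_cast
          ring
      rw [Finset.sum_congr rfl hterm, ← Finset.mul_sum, ← Finset.sum_div, ← Finset.sum_mul]
      -- Vandermonde
      have hvan : ∑ x ∈ Finset.range (A + 1), (B.choose x : ℝ) * ((K - B).choose (A - x) : ℝ) =
          (K.choose A : ℝ) := by
        have h := Nat.add_choose_eq B (K - B) A
        have hBK : B + (K - B) = K := by omega
        rw [hBK] at h
        rw [Finset.Nat.sum_antidiagonal_eq_sum_range_succ_mk] at h
        rw [h]
        push_cast
        rfl
      rw [hvan]
      -- now close with algebra
      rw [gk, gk, if_pos hi, if_pos hi, if_pos hA, if_pos hB, wk]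
      have hch : (K.choose A : ℝ) =
          (K.factorial : ℝ) / ((A.factorial : ℝ) * ((K - A).factorial : ℝ)) :=
        Nat.cast_choose ℝ hA
      rw [hch]
      have hf : ∀ n : ℕ, (n.factorial : ℝ) ≠ 0 :=
        fun n => Nat.cast_ne_zero.2 (Nat.factorial_ne_zero n)
      have h1 := hf A; have h2 := hf (K-A); have h3 := hf (K-B); have h4 := hf K
      field_simp
    · -- not (A ≤ K ∧ B ≤ K): both sides zero
      have hL : wk i K * gk M s i A K * gk M s i B K = 0 := by
        rw [gk, gk, if_pos hi, if_pos hi]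
        by_cases hA : A ≤ K
        · have hB : ¬ B ≤ K := by tauto
          rw [if_neg hB, mul_zero]
        · rw [if_neg hA, mul_zero, zero_mul]
      rw [hL]
      refine (Finset.sum_eq_zero ?_).symm
      intro x hx
      rw [Finset.mem_range] at hx
      by_cases hxB : x ≤ B
      · by_cases hK : A + B - x ≤ K
        · exfalso; omega
        · rw [show gk M (s*s) i (A + B - x) K = 0 from by rw [gk, if_pos hi, if_neg hK],
            mul_zero]
      · rw [show gk M s i x B = 0 from by rw [gk, if_pos hi, if_neg hxB], mul_zero, zero_mul]
  · -- i ∉ Sev M : delta functions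
    rw [Finset.sum_eq_single A]
    · rw [gk, gk, gk, gk, gk, if_neg hi, if_neg hi, if_neg hi, if_neg hi, if_neg hi,
        Nat.add_sub_cancel_left]
      have hw := wk_ne i A
      split_ifs <;> try (exfalso; omega)
      all_goals subst_vars
      all_goals try field_simp
      all_goals try ring
    · intro x hx hxA
      rw [show gk M s i x A = 0 from by rw [gk, if_neg hi, if_neg hxA]]
      ring
    · intro h
      exact absurd (Finset.self_mem_range_succ A) h

lemma support_subset_of_le {x a : ℕ →₀ ℕ} (h : x ≤ a) : x.support ⊆ a.support := by
  intro i hi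
  rw [Finsupp.mem_support_iff] at hi ⊢
  have := Finsupp.le_def.1 h i
  omega

lemma claimP (M : ℕ) (s : ℝ) (a b m : ℕ →₀ ℕ) :
    wMon m * phiP M s a m * phiP M s b m =
      ∑ x ∈ Finset.Iic a,
        (wMon a * wMon b / wMon x) * phiP M s x a * phiP M s x b *
          phiP M (s * s) (a + b - x) m := by
  classical
  set U := a.support ∪ b.support ∪ m.support with hU
  have hma : a.support ⊆ U := by
    intro t ht; exact Finset.mem_union.2 (Or.inl (Finset.mem_union.2 (Or.inl ht)))
  have hmb : b.support ⊆ U := by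
    intro t ht; exact Finset.mem_union.2 (Or.inl (Finset.mem_union.2 (Or.inr ht)))
  have hmm : m.support ⊆ U := fun t ht => Finset.mem_union.2 (Or.inr ht)
  have hLHS : wMon m * phiP M s a m * phiP M s b m =
      ∏ i ∈ U, (wk i (m i) * gk M s i (a i) (m i) * gk M s i (b i) (m i)) := by
    rw [wMon_eq_prod m hmm, phiP_eq_prod M s a m (Finset.union_subset hma hmm),
      phiP_eq_prod M s b m (Finset.union_subset hmb hmm),
      ← Finset.prod_mul_distrib, ← Finset.prod_mul_distrib]
  rw [hLHS]
  have hvan : ∀ i ∈ U, wk i (m i) * gk M s i (a i) (m i) * gk M s i (b i) (m i) =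
      ∑ x ∈ Finset.range (a i + 1),
        wk i (a i) * wk i (b i) / wk i x * gk M s i x (a i) * gk M s i x (b i) *
          gk M (s * s) i (a i + b i - x) (m i) := fun i _ => vander M s i (a i) (b i) (m i)
  rw [Finset.prod_congr rfl hvan]
  rw [prod_sum_Iic _ U a hma]
  refine Finset.sum_congr rfl (fun x hx => ?_)
  rw [Finset.mem_Iic] at hx
  have hxs : x.support ⊆ U := subset_trans (support_subset_of_le hx) hma
  have habx : (a + b - x).support ⊆ U := by
    refine subset_trans Finsupp.support_tsub ?_
    refine subset_trans Finsupp.support_add ?_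
    exact Finset.union_subset hma hmb
  rw [wMon_eq_prod a hma, wMon_eq_prod b hmb, wMon_eq_prod x hxs,
    phiP_eq_prod M s x a (Finset.union_subset hxs hma),
    phiP_eq_prod M s x b (Finset.union_subset hxs hmb),
    phiP_eq_prod M (s*s) _ m (Finset.union_subset habx hmm),
    ← Finset.prod_mul_distrib, ← Finset.prod_div_distrib, ← Finset.prod_mul_distrib,
    ← Finset.prod_mul_distrib, ← Finset.prod_mul_distrib]
  refine Finset.prod_congr rfl (fun i _ => ?_)
  rw [Finsupp.tsub_apply, Finsupp.add_apply]

end Vander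
section HasSumPart

noncomputable def cSum (M : ℕ) : ℝ := ∑ i ∈ Sev M, lamq i

lemma phiP_zero_left (M : ℕ) (r : ℝ) (t : ℕ →₀ ℕ) :
    phiP M r 0 t = if t.support ⊆ Sev M then
      ∏ i ∈ t.support, (r * lamq i) ^ t i / ((t i).factorial : ℝ) else 0 := by
  classical
  rw [phiP, Finsupp.support_zero, Finset.empty_union]
  by_cases hsub : t.support ⊆ Sev M
  · rw [if_pos hsub]
    refine Finset.prod_congr rfl (fun i hi => ?_)
    rw [Finsupp.coe_zero, Pi.zero_apply, gk, if_pos (hsub hi), if_pos (Nat.zero_le _),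
      Nat.sub_zero]
  · rw [if_neg hsub]
    rw [Finset.not_subset] at hsub
    obtain ⟨i, hi, hiS⟩ := hsub
    refine Finset.prod_eq_zero hi ?_
    rw [Finsupp.coe_zero, Pi.zero_apply, gk, if_neg hiS, if_neg]
    exact fun h => Finsupp.mem_support_iff.1 hi h.symm

lemma expfin_nonneg (S' : Finset ℕ) (μ : ℕ → ℝ) (hμ : ∀ i, 0 ≤ μ i) (t : ℕ →₀ ℕ) :
    0 ≤ (if t.support ⊆ S' then ∏ i ∈ t.support, μ i ^ t i / ((t i).factorial : ℝ) else 0) := by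
  split_ifs
  · refine Finset.prod_nonneg (fun i _ => ?_)
    have h1 : (0:ℝ) ≤ μ i ^ t i := pow_nonneg (hμ i) _
    have h2 : (0:ℝ) < ((t i).factorial : ℝ) := by positivity
    positivity
  · exact le_refl 0

lemma hasSum_transfer (j : ℕ) (f : (ℕ →₀ ℕ) → ℝ) (g1 : ℕ → ℝ) (g2 : (ℕ →₀ ℕ) → ℝ)
    (hA : ∀ u, g2 u ≠ 0 → u j = 0)
    (hB : ∀ (k : ℕ) (u : ℕ →₀ ℕ), u j = 0 → f (Finsupp.single j k + u) = g1 k * g2 u)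
    {S : ℝ} (hg : HasSum (fun p : ℕ × (ℕ →₀ ℕ) => g1 p.1 * g2 p.2) S) :
    HasSum f S := by
  classical
  refine (hasSum_iff_hasSum_of_ne_zero_bij
    (fun x => Finsupp.single j x.1.1 + x.1.2) ?_ ?_ ?_).2 hg
  · rintro ⟨⟨k, u⟩, hgu⟩ ⟨⟨k', u'⟩, hgu'⟩ hequ
    rw [Function.mem_support] at hgu hgu'
    have huj : u j = 0 := hA u (fun h => hgu (by dsimp only; rw [h, mul_zero]))
    have huj' : u' j = 0 := hA u' (fun h => hgu' (by dsimp only; rw [h, mul_zero]))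
    dsimp only at hequ
    have hk : k = k' := by
      have hc := congrArg (fun z : ℕ →₀ ℕ => z j) hequ
      rw [Finsupp.add_apply, Finsupp.add_apply, Finsupp.single_apply, if_pos rfl,
        Finsupp.single_apply, if_pos rfl, huj, huj'] at hc
      omega
    subst hk
    have hu : u = u' := add_left_cancel hequ
    subst hu
    rfl
  · intro t ht
    rw [Function.mem_support] at ht
    have herase_j : (Finsupp.erase j t) j = 0 := by
      rw [Finsupp.erase_apply, if_pos rfl]
    have hdecomp : Finsupp.single j (t j) + Finsupp.erase j t = t :=
      Finsupp.single_add_erase j t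
    have heq := hB (t j) (Finsupp.erase j t) herase_j
    rw [hdecomp] at heq
    have hgne : (fun p : ℕ × (ℕ →₀ ℕ) => g1 p.1 * g2 p.2) (t j, Finsupp.erase j t) ≠ 0 := by
      dsimp only
      rw [← heq]
      exact ht
    exact ⟨⟨(t j, Finsupp.erase j t), hgne⟩, hdecomp⟩
  · rintro ⟨⟨k, u⟩, hgu⟩
    rw [Function.mem_support] at hgu
    have huj : u j = 0 := hA u (fun h => hgu (by dsimp only; rw [h, mul_zero]))
    exact hB k u huj

set_option maxHeartbeats 2000000 in
lemma hasSum_expfin (μ : ℕ → ℝ) (hμ : ∀ i, 0 ≤ μ i) :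
    ∀ (S' : Finset ℕ),
    HasSum (fun t : ℕ →₀ ℕ => if t.support ⊆ S' then
        ∏ i ∈ t.support, μ i ^ t i / ((t i).factorial : ℝ) else 0)
      (∏ i ∈ S', Real.exp (μ i)) := by
  classical
  intro S'
  induction S' using Finset.induction with
  | empty =>
    rw [Finset.prod_empty]
    have h0 : (fun t : ℕ →₀ ℕ => if t.support ⊆ (∅ : Finset ℕ) then
        ∏ i ∈ t.support, μ i ^ t i / ((t i).factorial : ℝ) else 0) 0 = 1 := by
      simp
    rw [← h0]
    refine hasSum_single 0 (fun t ht => ?_)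
    rw [if_neg]
    intro h
    exact ht (Finsupp.support_eq_empty.1 (Finset.subset_empty.1 h))
  | @insert j S' hj IH =>
    rw [Finset.prod_insert hj]
    obtain ⟨F, hF⟩ : ∃ F : (ℕ →₀ ℕ) → ℝ, F = fun t : ℕ →₀ ℕ => if t.support ⊆ S' then
        ∏ i ∈ t.support, μ i ^ t i / ((t i).factorial : ℝ) else 0 := ⟨_, rfl⟩
    rw [← hF] at IH
    obtain ⟨G, hG⟩ : ∃ G : ℕ → ℝ, G = fun n : ℕ => μ j ^ n / (n.factorial : ℝ) := ⟨_, rfl⟩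
    have hexp : HasSum G (Real.exp (μ j)) := by
      rw [hG, Real.exp_eq_exp_ℝ]
      exact NormedSpace.expSeries_div_hasSum_exp (μ j)
    have hsummable : Summable (fun p : ℕ × (ℕ →₀ ℕ) => G p.1 * F p.2) := by
      refine Summable.mul_of_nonneg hexp.summable IH.summable ?_ ?_
      · intro n
        rw [hG]
        have h2 : (0:ℝ) < ((n).factorial : ℝ) := by positivity
        have h1 : (0:ℝ) ≤ μ j ^ n := pow_nonneg (hμ j) _
        positivity
      · intro t
        rw [hF]
        exact expfin_nonneg S' μ hμ t
    have hgsum : HasSum (fun p : ℕ × (ℕ →₀ ℕ) => G p.1 * F p.2)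
        (Real.exp (μ j) * ∏ i ∈ S', Real.exp (μ i)) := HasSum.mul hexp IH hsummable
    refine hasSum_transfer j _ _ _ ?_ ?_ hgsum
    · intro u hu
      subst hF
      dsimp only at hu
      by_contra h
      have hns : u.support ⊆ S' := by
        by_contra h2
        exact hu (by rw [if_neg h2])
      exact hj (hns (Finsupp.mem_support_iff.2 h))
    · intro k u huj
      subst hF
      subst hG
      dsimp only
      have huns : j ∉ u.support := Finsupp.notMem_support_iff.2 huj
      by_cases husub : u.support ⊆ S'
      · rcases Nat.eq_zero_or_pos k with hk | hk
        · subst hk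
          rw [Finsupp.single_zero, zero_add, pow_zero, Nat.factorial_zero, Nat.cast_one,
            div_one, one_mul]
          rw [if_pos (subset_trans husub (Finset.subset_insert j S')), if_pos husub]
        · have hdisj : Disjoint (Finsupp.single j k).support u.support := by
            rw [Finsupp.support_single_ne_zero j (by omega : k ≠ 0)]
            simp [huns]
          have hsupp : (Finsupp.single j k + u).support = insert j u.support := by
            rw [Finsupp.support_add_eq hdisj,
              Finsupp.support_single_ne_zero j (by omega : k ≠ 0), Finset.insert_eq]
          have happj : (Finsupp.single j k + u) j = k := by
            rw [Finsupp.add_apply, Finsupp.single_apply, if_pos rfl, huj, add_zero]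
          rw [hsupp, if_pos, if_pos husub]
          · rw [Finset.prod_insert huns, happj]
            congr 1
            refine Finset.prod_congr rfl (fun i hi => ?_)
            have hij : i ≠ j := fun h => huns (h ▸ hi)
            rw [Finsupp.add_apply, Finsupp.single_apply, if_neg (Ne.symm hij), zero_add]
          · rw [Finset.insert_subset_iff]
            exact ⟨Finset.mem_insert_self j S',
              subset_trans husub (Finset.subset_insert j S')⟩
      · rw [if_neg husub, mul_zero, if_neg]
        obtain ⟨i, hi, hiS⟩ := Finset.not_subset.1 husub
        have hij : i ≠ j := fun h => huns (h ▸ hi)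
        intro hcon
        have hmem : i ∈ (Finsupp.single j k + u).support := by
          rw [Finsupp.mem_support_iff, Finsupp.add_apply, Finsupp.single_apply,
            if_neg (Ne.symm hij), zero_add]
          exact Finsupp.mem_support_iff.1 hi
        have := hcon hmem
        rw [Finset.mem_insert] at this
        tauto

lemma gk_shift (M : ℕ) (r : ℝ) (i d t : ℕ) :
    gk M r i d (d + t) = gk M r i 0 t := by
  rw [gk, gk]
  by_cases hi : i ∈ Sev M
  · rw [if_pos hi, if_pos hi, if_pos (by omega : d ≤ d + t), if_pos (Nat.zero_le t),
      Nat.add_sub_cancel_left, Nat.sub_zero]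
  · rw [if_neg hi, if_neg hi]
    by_cases ht : t = 0
    · subst ht
      rw [if_pos (by omega), if_pos rfl]
    · rw [if_neg (by omega), if_neg (fun h => ht h.symm)]

lemma phiP_shift (M : ℕ) (r : ℝ) (d t : ℕ →₀ ℕ) :
    phiP M r d (d + t) = phiP M r 0 t := by
  classical
  set U := d.support ∪ (d + t).support ∪ t.support with hU
  have h1 : d.support ∪ (d + t).support ⊆ U := Finset.subset_union_left
  have h2 : (0 : ℕ →₀ ℕ).support ∪ t.support ⊆ U := by
    rw [Finsupp.support_zero, Finset.empty_union]
    exact Finset.subset_union_right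
  rw [phiP_eq_prod M r d (d + t) h1, phiP_eq_prod M r 0 t h2]
  refine Finset.prod_congr rfl (fun i _ => ?_)
  rw [Finsupp.coe_zero, Pi.zero_apply, Finsupp.add_apply]
  exact gk_shift M r i (d i) (t i)

lemma hasSum_phiP (M : ℕ) (r : ℝ) (hr : 0 ≤ r) (d : ℕ →₀ ℕ) :
    HasSum (fun m => phiP M r d m) (Real.exp (r * cSum M)) := by
  classical
  have hμ : ∀ i, 0 ≤ r * lamq i := fun i => mul_nonneg hr (lamq_pos i).le
  have h0 : HasSum (fun t => phiP M r 0 t) (Real.exp (r * cSum M)) := by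
    have hfun : (fun t => phiP M r 0 t) = (fun t : ℕ →₀ ℕ =>
        if t.support ⊆ Sev M then
          ∏ i ∈ t.support, (r * lamq i) ^ t i / ((t i).factorial : ℝ) else 0) :=
      funext (phiP_zero_left M r)
    have hval : Real.exp (r * cSum M) = ∏ i ∈ Sev M, Real.exp (r * lamq i) := by
      rw [← Real.exp_sum, cSum, Finset.mul_sum]
    rw [hfun, hval]
    exact hasSum_expfin _ hμ _
  refine (Function.Injective.hasSum_iff (g := fun t => d + t)
    (fun x y h => by exact add_left_cancel h) ?_).1 ?_
  · intro m hm
    refine phiP_eq_zero_of_not_le M r ?_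
    intro hle
    exact hm ⟨m - d, add_tsub_cancel_of_le hle⟩
  · have : ((fun m => phiP M r d m) ∘ fun t => d + t) = fun t => phiP M r 0 t :=
      funext (fun t => phiP_shift M r d t)
    rw [this]
    exact h0

end HasSumPart
section Core

lemma Qval (M : ℕ) (s : ℝ) (a b : ℕ →₀ ℕ) :
    ipF (expB M s (MvPolynomial.monomial a 1)) (expB M s (MvPolynomial.monomial b 1)) =
      ∑ x ∈ Finset.Iic a,
        wMon a * wMon b / wMon x * phiP M s x a * phiP M s x b := by
  classical
  rw [expB_monomial, expB_monomial, ipf_sum_left]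
  refine Finset.sum_congr rfl (fun x hx => ?_)
  rw [ipf_smul_left, ipf_sum_right]
  have hinner : ∀ y ∈ Finset.Iic b,
      ipF (MvPolynomial.monomial x 1)
        ((wMon b * phiP M s y b / wMon y) • MvPolynomial.monomial y 1) =
      if x = y then wMon b * phiP M s y b / wMon y * wMon x else 0 := by
    intro y _
    rw [ipf_smul_right, ipf_mono_mono, mul_ite, mul_zero]
  rw [Finset.sum_congr rfl hinner, Finset.sum_ite_eq]
  by_cases hxb : x ≤ b
  · rw [if_pos (Finset.mem_Iic.2 hxb)]
    have h1 := wMon_ne x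
    field_simp
  · rw [if_neg (fun h => hxb (Finset.mem_Iic.1 h)), mul_zero,
      phiP_eq_zero_of_not_le M s hxb, mul_zero]

lemma core (M : ℕ) (s : ℝ) (a b : ℕ →₀ ℕ) :
    HasSum (fun m => wMon m * phiP M s a m * phiP M s b m)
      (Real.exp (s * s * cSum M) *
        ipF (expB M s (MvPolynomial.monomial a 1)) (expB M s (MvPolynomial.monomial b 1))) := by
  classical
  have hx : ∀ x ∈ Finset.Iic a,
      HasSum (fun m => wMon a * wMon b / wMon x * phiP M s x a * phiP M s x b *
          phiP M (s * s) (a + b - x) m)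
        (wMon a * wMon b / wMon x * phiP M s x a * phiP M s x b *
          Real.exp (s * s * cSum M)) :=
    fun x _ => (hasSum_phiP M (s * s) (mul_self_nonneg s) (a + b - x)).mul_left _
  have hsum := hasSum_sum hx
  have hfun : (fun m => ∑ x ∈ Finset.Iic a,
      wMon a * wMon b / wMon x * phiP M s x a * phiP M s x b *
        phiP M (s * s) (a + b - x) m) =
      (fun m => wMon m * phiP M s a m * phiP M s b m) :=
    funext (fun m => (claimP M s a b m).symm)
  rw [hfun] at hsum
  have hval : ∑ x ∈ Finset.Iic a,
      wMon a * wMon b / wMon x * phiP M s x a * phiP M s x b * Real.exp (s * s * cSum M) =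
      Real.exp (s * s * cSum M) *
        ipF (expB M s (MvPolynomial.monomial a 1)) (expB M s (MvPolynomial.monomial b 1)) := by
    rw [Qval M s a b, Finset.mul_sum]
    exact Finset.sum_congr rfl (fun x _ => by ring)
  rwa [hval] at hsum

lemma ipf_expB_expand (M : ℕ) (s : ℝ) (f g : FockPoly) :
    ipF (expB M s f) (expB M s g) =
      ∑ p ∈ f.support ×ˢ g.support,
        MvPolynomial.coeff p.1 f * MvPolynomial.coeff p.2 g *
          ipF (expB M s (MvPolynomial.monomial p.1 1)) (expB M s (MvPolynomial.monomial p.2 1)) := by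
  classical
  conv_lhs => rw [MvPolynomial.as_sum f, MvPolynomial.as_sum g]
  rw [expB_sum, expB_sum, ipf_sum_left, Finset.sum_product]
  refine Finset.sum_congr rfl (fun x hx => ?_)
  rw [ipf_sum_right]
  refine Finset.sum_congr rfl (fun y hy => ?_)
  have hxm : (MvPolynomial.monomial x) (MvPolynomial.coeff x f) =
      MvPolynomial.coeff x f • MvPolynomial.monomial x 1 := by
    rw [MvPolynomial.smul_monomial, smul_eq_mul, mul_one]
  have hym : (MvPolynomial.monomial y) (MvPolynomial.coeff y g) =
      MvPolynomial.coeff y g • MvPolynomial.monomial y 1 := by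
    rw [MvPolynomial.smul_monomial, smul_eq_mul, mul_one]
  rw [hxm, hym, expB_smul, expB_smul, ipf_smul_left, ipf_smul_right]
  ring

lemma main_hasSum (M : ℕ) (s : ℝ) (f g : FockPoly) :
    HasSum (fun m => ∑ p ∈ f.support ×ˢ g.support,
        MvPolynomial.coeff p.1 f * MvPolynomial.coeff p.2 g *
          (wMon m * phiP M s p.1 m * phiP M s p.2 m))
      (Real.exp (s * s * cSum M) * ipF (expB M s f) (expB M s g)) := by
  classical
  have hpair : ∀ p ∈ f.support ×ˢ g.support,
      HasSum (fun m => MvPolynomial.coeff p.1 f * MvPolynomial.coeff p.2 g *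
          (wMon m * phiP M s p.1 m * phiP M s p.2 m))
        (MvPolynomial.coeff p.1 f * MvPolynomial.coeff p.2 g *
          (Real.exp (s * s * cSum M) *
            ipF (expB M s (MvPolynomial.monomial p.1 1))
              (expB M s (MvPolynomial.monomial p.2 1)))) :=
    fun p _ => (core M s p.1 p.2).mul_left _
  have h := hasSum_sum hpair
  have hval : ∑ p ∈ f.support ×ˢ g.support,
      MvPolynomial.coeff p.1 f * MvPolynomial.coeff p.2 g *
        (Real.exp (s * s * cSum M) *
          ipF (expB M s (MvPolynomial.monomial p.1 1))
            (expB M s (MvPolynomial.monomial p.2 1))) =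
      Real.exp (s * s * cSum M) * ipF (expB M s f) (expB M s g) := by
    rw [ipf_expB_expand, Finset.mul_sum]
    exact Finset.sum_congr rfl (fun p _ => by ring)
  rwa [hval] at h

end Core

section Assembly

lemma cM_eq' (M : ℕ) (hM : 1 ≤ M) : cM M = cSum M := by
  rw [cM_eq M hM, cSum]

lemma WMe1 (M : ℕ) (u : FockPoly) (m : ℕ →₀ ℕ) :
    WM M u (MvPolynomial.monomial m 1) =
      wMon m * ∑ a ∈ (expB M (-1) u).support,
        MvPolynomial.coeff a (expB M (-1) u) * phiP M 1 a m := by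
  rw [WM]
  exact ipf_expB_monomial M 1 _ m

lemma WMe2 (M : ℕ) (u : FockPoly) (m : ℕ →₀ ℕ) :
    WM M (MvPolynomial.monomial m 1) u =
      wMon m * ∑ a ∈ (expB M 1 u).support,
        MvPolynomial.coeff a (expB M 1 u) * phiP M (-1) a m := by
  rw [WM, ipf_comm]
  exact ipf_expB_monomial M (-1) _ m

lemma summand_expand (M : ℕ) (s : ℝ) (f g : FockPoly) (m : ℕ →₀ ℕ) :
    (wMon m * ∑ a ∈ f.support, MvPolynomial.coeff a f * phiP M s a m) *
      (wMon m * ∑ b ∈ g.support, MvPolynomial.coeff b g * phiP M s b m) / wMon m =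
    ∑ p ∈ f.support ×ˢ g.support,
      MvPolynomial.coeff p.1 f * MvPolynomial.coeff p.2 g *
        (wMon m * phiP M s p.1 m * phiP M s p.2 m) := by
  classical
  rw [Finset.sum_product]
  have hw := wMon_ne m
  rw [show (wMon m * ∑ a ∈ f.support, MvPolynomial.coeff a f * phiP M s a m) *
      (wMon m * ∑ b ∈ g.support, MvPolynomial.coeff b g * phiP M s b m) / wMon m =
      wMon m * ((∑ a ∈ f.support, MvPolynomial.coeff a f * phiP M s a m) *
        (∑ b ∈ g.support, MvPolynomial.coeff b g * phiP M s b m)) from by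
    field_simp
    ]
  rw [Finset.sum_mul_sum, Finset.mul_sum]
  refine Finset.sum_congr rfl (fun a _ => ?_)
  rw [Finset.mul_sum]
  refine Finset.sum_congr rfl (fun b _ => ?_)
  ring

lemma stmt1_hasSum (M : ℕ) (u v : FockPoly) :
    HasSum (fun m => WM M u (MvPolynomial.monomial m 1) *
        WM M v (MvPolynomial.monomial m 1) / wMon m)
      (Real.exp (cSum M) * ipF u v) := by
  have h := main_hasSum M 1 (expB M (-1) u) (expB M (-1) v)
  rw [expB_cancel, expB_cancel, show (1:ℝ) * 1 = 1 from one_mul 1, one_mul (cSum M)] at h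
  have hfun : (fun m => ∑ p ∈ (expB M (-1) u).support ×ˢ (expB M (-1) v).support,
      MvPolynomial.coeff p.1 (expB M (-1) u) * MvPolynomial.coeff p.2 (expB M (-1) v) *
        (wMon m * phiP M 1 p.1 m * phiP M 1 p.2 m)) =
      (fun m => WM M u (MvPolynomial.monomial m 1) *
        WM M v (MvPolynomial.monomial m 1) / wMon m) := by
    funext m
    rw [WMe1, WMe1, summand_expand]
  rwa [hfun] at h

lemma stmt2_hasSum (M : ℕ) (u v : FockPoly) :
    HasSum (fun m => WM M (MvPolynomial.monomial m 1) u *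
        WM M (MvPolynomial.monomial m 1) v / wMon m)
      (Real.exp (cSum M) * ipF u v) := by
  have h := main_hasSum M (-1) (expB M 1 u) (expB M 1 v)
  rw [expB_cancel', expB_cancel', show ((-1):ℝ) * (-1) = 1 from by norm_num, one_mul (cSum M)] at h
  have hfun : (fun m => ∑ p ∈ (expB M 1 u).support ×ˢ (expB M 1 v).support,
      MvPolynomial.coeff p.1 (expB M 1 u) * MvPolynomial.coeff p.2 (expB M 1 v) *
        (wMon m * phiP M (-1) p.1 m * phiP M (-1) p.2 m)) =
      (fun m => WM M (MvPolynomial.monomial m 1) u *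
        WM M (MvPolynomial.monomial m 1) v / wMon m) := by
    funext m
    rw [WMe2, WMe2, summand_expand]
  rwa [hfun] at h

lemma ipf_self_nonneg (v : FockPoly) : 0 ≤ ipF v v := by
  rw [ipf_eq_sum v v (le_refl _)]
  refine Finset.sum_nonneg (fun m _ => ?_)
  have h1 : 0 ≤ MvPolynomial.coeff m v * MvPolynomial.coeff m v := mul_self_nonneg _
  have h2 : (0:ℝ) ≤ wMon m := (wMon_pos m).le
  exact mul_nonneg h1 h2

lemma WM_expand (M : ℕ) (u v : FockPoly) :
    WM M u v = ∑ m ∈ v.support, MvPolynomial.coeff m v * WM M u (MvPolynomial.monomial m 1) := by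
  classical
  rw [WM]
  conv_lhs => rw [MvPolynomial.as_sum v]
  rw [expB_sum, ipf_sum_right]
  refine Finset.sum_congr rfl (fun m hm => ?_)
  have hmm : (MvPolynomial.monomial m) (MvPolynomial.coeff m v) =
      MvPolynomial.coeff m v • MvPolynomial.monomial m 1 := by
    rw [MvPolynomial.smul_monomial, smul_eq_mul, mul_one]
  rw [hmm, expB_smul, ipf_smul_right, WM]

end Assembly


/-- `(W^{[M]}†)⁻¹ = exp(-∑ 1/(2n+1)) W^{[M]}`, i.e. `W†W = WW† = e^{c} · Id`
(expressed through matrix elements against the orthogonal monomial basis);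
consequently every matrix element of `W^{[M]}` between unit vectors is bounded by
`exp((1/2) ∑_{n=0}^{⌊(M-1)/2⌋} 1/(2n+1))`. -/
theorem stmt19 (M : ℕ) (hM : 1 ≤ M) :
    (∀ u v : FockPoly,
      ∑' m : ℕ →₀ ℕ,
          WM M u (MvPolynomial.monomial m 1) * WM M v (MvPolynomial.monomial m 1) / wMon m =
        Real.exp (cM M) * ipF u v) ∧
    (∀ u v : FockPoly,
      ∑' m : ℕ →₀ ℕ,
          WM M (MvPolynomial.monomial m 1) u * WM M (MvPolynomial.monomial m 1) v / wMon m =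
        Real.exp (cM M) * ipF u v) ∧
    (∀ u v : FockPoly,
      |WM M u v| ≤ Real.exp (cM M / 2) * Real.sqrt (ipF u u) * Real.sqrt (ipF v v)) := by

  refine ⟨?_, ?_, ?_⟩
  · intro u v
    rw [cM_eq' M hM]
    exact (stmt1_hasSum M u v).tsum_eq
  · intro u v
    rw [cM_eq' M hM]
    exact (stmt2_hasSum M u v).tsum_eq
  · intro u v
    have h1 := stmt1_hasSum M u u
    set T := v.support with hT
    have hWuv : WM M u v = ∑ m ∈ T,
        (WM M u (MvPolynomial.monomial m 1) / Real.sqrt (wMon m)) *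
          (MvPolynomial.coeff m v * Real.sqrt (wMon m)) := by
      rw [WM_expand]
      refine Finset.sum_congr rfl (fun m _ => ?_)
      have hw : Real.sqrt (wMon m) ≠ 0 := by
        rw [Real.sqrt_ne_zero']
        exact wMon_pos m
      field_simp
    have hCS := sum_mul_sq_le_sq_mul_sq T
      (fun m => WM M u (MvPolynomial.monomial m 1) / Real.sqrt (wMon m))
      (fun m => MvPolynomial.coeff m v * Real.sqrt (wMon m))
    have hfsq : ∀ m : ℕ →₀ ℕ, (WM M u (MvPolynomial.monomial m 1) / Real.sqrt (wMon m)) ^ 2 =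
        WM M u (MvPolynomial.monomial m 1) * WM M u (MvPolynomial.monomial m 1) / wMon m := by
      intro m
      rw [div_pow, Real.sq_sqrt (wMon_pos m).le, sq]
    have hgsq : ∀ m : ℕ →₀ ℕ, (MvPolynomial.coeff m v * Real.sqrt (wMon m)) ^ 2 =
        MvPolynomial.coeff m v * MvPolynomial.coeff m v * wMon m := by
      intro m
      rw [mul_pow, Real.sq_sqrt (wMon_pos m).le, sq]
    have hle1 : ∑ m ∈ T,
        WM M u (MvPolynomial.monomial m 1) * WM M u (MvPolynomial.monomial m 1) / wMon m ≤
        Real.exp (cSum M) * ipF u u := by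
      refine sum_le_hasSum T (fun m _ => ?_) h1
      exact div_nonneg (mul_self_nonneg _) (wMon_pos m).le
    have hsum2 : ∑ m ∈ T, MvPolynomial.coeff m v * MvPolynomial.coeff m v * wMon m =
        ipF v v := (ipf_eq_sum v v (le_refl _)).symm
    have hsq : (WM M u v) ^ 2 ≤ Real.exp (cSum M) * ipF u u * ipF v v := by
      rw [hWuv]
      refine le_trans hCS ?_
      rw [Finset.sum_congr rfl (fun m _ => hfsq m), Finset.sum_congr rfl (fun m _ => hgsq m),
        hsum2]
      exact mul_le_mul_of_nonneg_right hle1 (ipf_self_nonneg v)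
    have habs := Real.abs_le_sqrt hsq
    refine le_trans habs ?_
    have hEA : (0:ℝ) ≤ Real.exp (cSum M) * ipF u u :=
      mul_nonneg (Real.exp_nonneg _) (ipf_self_nonneg u)
    rw [Real.sqrt_mul hEA, Real.sqrt_mul (Real.exp_nonneg _)]
    rw [cM_eq' M hM, Real.exp_half]
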